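/- Let G be a simple graph on a finite vertex set V, let c : V → Fin 3 be a proper coloring of G, assume G has no proper coloring with values in Fin 2, and let k : ℕ. Let H be the graph on W = V ⊕ Fin 3 ⊕ ({p : V × Fin 3 // p.2 ≠ c p.1} × Fin (k + 1)) ⊕ Fin 4 with exactly the following adjacencies: Sum.inl u ∼ Sum.inl u' iff G.Adj u u'; the three vertices of the Fin 3 block are pairwise adjacent; each gadget vertex (⟨(u, d), h⟩, s) is adjacent exactly to Sum.inl u and to vertex d of the Fin 3 block; vertices 0 and 1 of the Fin 4 block are adjacent exactly to vertex 0 of the Fin 3 block, and vertices 2 and 3 of the Fin 4 block are adjacent exactly to vertex 1 of the Fin 3 block. Define ĉ : W → Fin 3 by: ĉ(Sum.inl u) = c u; ĉ sends vertex i of the Fin 3 block to i; ĉ sends the gadget vertex (⟨(u, d), h⟩, s) to the unique element of Fin 3 distinct from both c u and d; and on the Fin 4 block, ĉ(0) = 1, ĉ(1) = 2, ĉ(2) = 0, ĉ(3) = 2. Then ĉ is a proper coloring of H, and if D ⊆ V is a defining set of size at most k for c among proper 3-colorings of G, then the image of D under Sum.inl together with the four vertices of the Fin 4 block is a defining set of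 size at most k + 4 for ĉ among proper 3-colorings of H. -/

import Mathlib

/-- `f` is a proper coloring of `G`. -/
def IsProperColoring {U R : Type*} (G : SimpleGraph U) (f : U → R) : Prop :=
  ∀ u v : U, G.Adj u v → f u ≠ f v

/-- `D` is a defining set for `(F, s)`: `s ∈ F` and `s` is the unique element
of `F` agreeing with `s` at every element of `D`. -/
def IsDefiningSet {V R : Type*} (F : Set (V → R)) (s : V → R) (D : Finset V) : Prop :=
  s ∈ F ∧ ∀ f ∈ F, (∀ x ∈ D, f x = s x) → f = s

/-- The vertex set of the graph `H` of Theorem 3.3: the vertices of `G`, a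
triangle `w₀w₁w₂`, for every vertex `u` of `G` and color `d ≠ c u` a block of
`k + 1` gadget vertices, and four pendant vertices. -/
abbrev HVert (V : Type*) (c : V → Fin 3) (k : ℕ) :=
  V ⊕ Fin 3 ⊕ ({p : V × Fin 3 // p.2 ≠ c p.1} × Fin (k + 1)) ⊕ Fin 4

/-- The base relation generating the adjacencies of `H`. -/
def hRel {V : Type*} (G : SimpleGraph V) (c : V → Fin 3) (k : ℕ) :
    HVert V c k → HVert V c k → Prop
  | Sum.inl u, Sum.inl u' => G.Adj u u'
  | Sum.inr (Sum.inl _), Sum.inr (Sum.inl _) => True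
  | Sum.inr (Sum.inr (Sum.inl (g, _))), Sum.inl u => u = g.1.1
  | Sum.inr (Sum.inr (Sum.inl (g, _))), Sum.inr (Sum.inl d) => d = g.1.2
  | Sum.inr (Sum.inr (Sum.inr a)), Sum.inr (Sum.inl j) =>
      ((a = 0 ∨ a = 1) ∧ j = 0) ∨ ((a = 2 ∨ a = 3) ∧ j = 1)
  | _, _ => False

/-- The graph `H` of Theorem 3.3: `Sum.inl u ∼ Sum.inl u'` iff `G.Adj u u'`;
the `Fin 3` block is a triangle; each gadget vertex `(⟨(u, d), _⟩, s)` is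
adjacent exactly to `Sum.inl u` and to vertex `d` of the triangle; pendant
vertices `0, 1` are adjacent exactly to `w₀` and `2, 3` to `w₁`. -/
def HGraph {V : Type*} (G : SimpleGraph V) (c : V → Fin 3) (k : ℕ) :
    SimpleGraph (HVert V c k) :=
  SimpleGraph.fromRel (hRel G c k)

/-- The explicit extension `ĉ` of the coloring `c` of `G` to the graph `H`:
`ĉ` agrees with `c` on `G`, colors `wᵢ` with `i`, colors the gadget vertex at
`(u, d)` with the unique color distinct from both `c u` and `d` (namely
`-(c u + d)`, as the three colors of `Fin 3` sum to `0`), and colors the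
pendant vertices `0, 1, 2, 3` with `1, 2, 0, 2` respectively. -/
def chat {V : Type*} (c : V → Fin 3) (k : ℕ) : HVert V c k → Fin 3
  | Sum.inl u => c u
  | Sum.inr (Sum.inl i) => i
  | Sum.inr (Sum.inr (Sum.inl (g, _))) => -(c g.1.1 + g.1.2)
  | Sum.inr (Sum.inr (Sum.inr a)) =>
      if a = 0 then 1 else if a = 1 then 2 else if a = 2 then 0 else 2

set_option synthInstance.maxSize 1024

lemma fin3_unique : ∀ a b x : Fin 3, a ≠ b → x ≠ a → x ≠ b → x = -(a + b) := by decide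
lemma fin3_third_ne : ∀ a b : Fin 3, a ≠ b → -(a + b) ≠ a ∧ -(a + b) ≠ b := by decide
lemma fin3_eq0 : ∀ x : Fin 3, x ≠ 1 → x ≠ 2 → x = 0 := by decide
lemma fin3_eq1 : ∀ x : Fin 3, x ≠ 0 → x ≠ 2 → x = 1 := by decide
lemma fin3_eq2 : ∀ x : Fin 3, x ≠ 0 → x ≠ 1 → x = 2 := by decide

lemma hgraph_adj_of_rel {V : Type*} (G : SimpleGraph V) (c : V → Fin 3) (k : ℕ)
    {x y : HVert V c k} (hne : x ≠ y) (h : hRel G c k x y) : (HGraph G c k).Adj x y := by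
  rw [HGraph, SimpleGraph.fromRel_adj]; exact ⟨hne, Or.inl h⟩


/-- Forward direction of the reduction in the proof of Theorem 3.3: `ĉ` is a
proper 3-coloring of `H`, and the image under `Sum.inl` of a defining set of
size at most `k` for `(G, c)` together with the four pendant vertices is a
defining set of size at most `k + 4` for `(H, ĉ)`. -/
theorem stmt_12 {V : Type*} [Fintype V] [DecidableEq V] (G : SimpleGraph V)
    (c : V → Fin 3) (hc : IsProperColoring G c)
    (h2 : ¬ ∃ c₂ : V → Fin 2, IsProperColoring G c₂) (k : ℕ) :
    IsProperColoring (HGraph G c k) (chat c k) ∧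
    ∀ D : Finset V, D.card ≤ k →
      IsDefiningSet {f | IsProperColoring G f} c D →
      (D.image (Sum.inl : V → HVert V c k) ∪
          Finset.univ.image
            (fun a : Fin 4 => (Sum.inr (Sum.inr (Sum.inr a)) : HVert V c k))).card
          ≤ k + 4 ∧
      IsDefiningSet {f | IsProperColoring (HGraph G c k) f} (chat c k)
        (D.image (Sum.inl : V → HVert V c k) ∪
          Finset.univ.image
            (fun a : Fin 4 => (Sum.inr (Sum.inr (Sum.inr a)) : HVert V c k))) := by

  have hproper : IsProperColoring (HGraph G c k) (chat c k) := by
    have key : ∀ x y : HVert V c k, x ≠ y → hRel G c k x y → chat c k x ≠ chat c k y := by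
      rintro (u | i | ⟨g, s⟩ | a) (u' | i' | ⟨g', s'⟩ | a') hne h <;>
        simp only [hRel] at h
      · exact hc _ _ h
      · simpa [chat] using fun h' => hne (by rw [h'])
      · subst h; exact (fin3_third_ne (c g.1.1) g.1.2 (Ne.symm g.2)).1
      · subst h; exact (fin3_third_ne (c g.1.1) g.1.2 (Ne.symm g.2)).2
      · rcases h with ⟨h1 | h1, h2⟩ | ⟨h1 | h1, h2⟩ <;> subst h1 <;> subst h2 <;> simp [chat]
    intro x y hxy
    rw [HGraph, SimpleGraph.fromRel_adj] at hxy
    obtain ⟨hne, h | h⟩ := hxy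
    · exact key x y hne h
    · exact (key y x hne.symm h).symm
  refine ⟨hproper, fun D hD hdef => ⟨?_, ?_⟩⟩
  · calc (D.image _ ∪ _).card ≤ (D.image (Sum.inl : V → HVert V c k)).card +
          (Finset.univ.image
            (fun a : Fin 4 => (Sum.inr (Sum.inr (Sum.inr a)) : HVert V c k))).card :=
        Finset.card_union_le _ _
      _ ≤ k + 4 := by
        have h1 := Finset.card_image_le (s := D) (f := (Sum.inl : V → HVert V c k))
        have h4 := Finset.card_image_le (s := (Finset.univ : Finset (Fin 4)))
          (f := fun a : Fin 4 => (Sum.inr (Sum.inr (Sum.inr a)) : HVert V c k))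
        simp only [Finset.card_univ, Fintype.card_fin] at h4
        omega
  refine ⟨hproper, fun f hf hagree => ?_⟩
  simp only [Set.mem_setOf_eq] at hf
  -- values at pendant vertices
  have hpend : ∀ a : Fin 4, f (Sum.inr (Sum.inr (Sum.inr a))) =
      chat c k (Sum.inr (Sum.inr (Sum.inr a))) := by
    intro a
    exact hagree _ (Finset.mem_union_right _ (Finset.mem_image_of_mem _ (Finset.mem_univ a)))
  -- value at w0
  have hw0 : f (Sum.inr (Sum.inl 0)) = 0 := by
    have ha0 := hf _ _ (hgraph_adj_of_rel G c k (by simp)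
      (show hRel G c k (Sum.inr (Sum.inr (Sum.inr 0))) (Sum.inr (Sum.inl 0)) by
        simp [hRel]))
    have ha1 := hf _ _ (hgraph_adj_of_rel G c k (by simp)
      (show hRel G c k (Sum.inr (Sum.inr (Sum.inr 1))) (Sum.inr (Sum.inl 0)) by
        simp [hRel]))
    rw [hpend 0] at ha0; rw [hpend 1] at ha1
    exact fin3_eq0 _ (fun h => ha0 (by rw [h]; rfl)) (fun h => ha1 (by rw [h]; rfl))
  have hw1 : f (Sum.inr (Sum.inl 1)) = 1 := by
    have ha0 := hf _ _ (hgraph_adj_of_rel G c k (by simp)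
      (show hRel G c k (Sum.inr (Sum.inr (Sum.inr 2))) (Sum.inr (Sum.inl 1)) by
        simp [hRel]))
    have ha1 := hf _ _ (hgraph_adj_of_rel G c k (by simp)
      (show hRel G c k (Sum.inr (Sum.inr (Sum.inr 3))) (Sum.inr (Sum.inl 1)) by
        simp [hRel]))
    rw [hpend 2] at ha0; rw [hpend 3] at ha1
    exact fin3_eq1 _ (fun h => ha0 (by rw [h]; rfl)) (fun h => ha1 (by rw [h]; rfl))
  have hw2 : f (Sum.inr (Sum.inl 2)) = 2 := by
    have ha0 := hf _ _ (hgraph_adj_of_rel G c k (by simp)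
      (show hRel G c k (Sum.inr (Sum.inl 2)) (Sum.inr (Sum.inl 0)) by simp [hRel]))
    have ha1 := hf _ _ (hgraph_adj_of_rel G c k (by simp)
      (show hRel G c k (Sum.inr (Sum.inl 2)) (Sum.inr (Sum.inl 1)) by simp [hRel]))
    rw [hw0] at ha0; rw [hw1] at ha1
    exact fin3_eq2 _ ha0 ha1
  have hwi : ∀ i : Fin 3, f (Sum.inr (Sum.inl i)) = i := by
    intro i; fin_cases i <;> assumption
  -- f restricted to V equals c
  have hV : ∀ u : V, f (Sum.inl u) = c u := by
    have hprop : IsProperColoring G (fun u => f (Sum.inl u)) := by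
      intro u v huv
      exact hf _ _ (hgraph_adj_of_rel G c k (by simp [G.ne_of_adj huv]) huv)
    have := hdef.2 _ hprop (fun x hx => by
      have := hagree (Sum.inl x) (Finset.mem_union_left _ (Finset.mem_image_of_mem _ hx))
      simpa [chat] using this)
    intro u; exact congrFun this u
  -- conclude
  funext x
  rcases x with u | i | ⟨g, s⟩ | a
  · exact hV u
  · exact (hwi i).trans rfl
  · have h1 := hf _ _ (hgraph_adj_of_rel G c k (by simp)
      (show hRel G c k (Sum.inr (Sum.inr (Sum.inl (g, s)))) (Sum.inl g.1.1) by simp [hRel]))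
    have h2 := hf _ _ (hgraph_adj_of_rel G c k (by simp)
      (show hRel G c k (Sum.inr (Sum.inr (Sum.inl (g, s)))) (Sum.inr (Sum.inl g.1.2)) by
        simp [hRel]))
    rw [hV g.1.1] at h1
    rw [hwi g.1.2] at h2
    exact fin3_unique (c g.1.1) g.1.2 _ (Ne.symm g.2) h1 h2
  · exact hpend a
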